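/- Let X be a compact Hausdorff topological space, let X₀ be a dense subset of X, and let A be a uniformly bounded set of continuous real-valued functions on X. Suppose the double limit condition holds relative to X₀: for every sequence (f_m) in A and every sequence (x_n) in X₀, whenever both iterated limits lim_n lim_m f_m(x_n) and lim_m lim_n f_m(x_n) exist, they are equal. Then the double limit condition also holds relative to all of X: for every sequence (f_m) in A and every sequence (y_n) of points of X, whenever both iterated limits lim_n lim_m f_m(y_n) and lim_m lim_n f_m(y_n) exist, they are equal. -/
import Mathlib


open Filter Topology

/-- Upgrade of the double limit condition from a dense subset `X₀` to the whole
compact Hausdorff space `X`, for a uniformly bounded family `A` of continuous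
functions. -/
theorem double_limit_dense_to_global {X : Type*} [TopologicalSpace X] [CompactSpace X]
    [T2Space X]
    (X₀ : Set X) (hX₀ : Dense X₀)
    (A : Set (X → ℝ)) (hcont : ∀ f ∈ A, Continuous f)
    (C : ℝ) (hbd : ∀ f ∈ A, ∀ x, |f x| ≤ C)
    (hdl : ∀ (f : ℕ → X → ℝ), (∀ m, f m ∈ A) →
        ∀ (x : ℕ → X), (∀ n, x n ∈ X₀) →
        ∀ (c d : ℕ → ℝ) (r s : ℝ),
          (∀ n, Tendsto (fun m => f m (x n)) atTop (𝓝 (c n))) →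
          Tendsto c atTop (𝓝 r) →
          (∀ m, Tendsto (fun n => f m (x n)) atTop (𝓝 (d m))) →
          Tendsto d atTop (𝓝 s) →
          r = s) :
    ∀ (f : ℕ → X → ℝ), (∀ m, f m ∈ A) →
      ∀ (y : ℕ → X),
      ∀ (c d : ℕ → ℝ) (r s : ℝ),
        (∀ n, Tendsto (fun m => f m (y n)) atTop (𝓝 (c n))) →
        Tendsto c atTop (𝓝 r) →
        (∀ m, Tendsto (fun n => f m (y n)) atTop (𝓝 (d m))) →
        Tendsto d atTop (𝓝 s) →
        r = s := by
  intro f hf y c d r s hc hcr hd hds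
  -- Step 1: for each `n, p`, choose a point of `X₀` close to `y n` w.r.t. `f 0, …, f p`.
  have hchoose : ∀ n p : ℕ, ∃ z, z ∈ X₀ ∧
      ∀ m ≤ p, |f m z - f m (y n)| < 1 / ((p : ℝ) + 1) := by
    intro n p
    have hεpos : (0 : ℝ) < 1 / ((p : ℝ) + 1) := by positivity
    have hopen : IsOpen {z : X | ∀ m ∈ Finset.range (p + 1),
        |f m z - f m (y n)| < 1 / ((p : ℝ) + 1)} := by
      have heq : {z : X | ∀ m ∈ Finset.range (p + 1),
            |f m z - f m (y n)| < 1 / ((p : ℝ) + 1)}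
          = ⋂ m ∈ Finset.range (p + 1),
            {z : X | |f m z - f m (y n)| < 1 / ((p : ℝ) + 1)} := by
        ext z; simp
      rw [heq]
      refine isOpen_biInter_finset fun m _ => ?_
      have hcm : Continuous fun z => |f m z - f m (y n)| :=
        ((hcont _ (hf m)).sub continuous_const).abs
      exact isOpen_lt hcm continuous_const
    have hne : {z : X | ∀ m ∈ Finset.range (p + 1),
        |f m z - f m (y n)| < 1 / ((p : ℝ) + 1)}.Nonempty :=
      ⟨y n, by simpa using fun m _ => hεpos⟩
    obtain ⟨z, hz₀, hz⟩ := hX₀.exists_mem_open hopen hne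
    exact ⟨z, hz₀, fun m hm => hz m (Finset.mem_range.mpr (Nat.lt_succ_of_le hm))⟩
  choose x hx₀ hx using hchoose
  -- Step 2: for each fixed `n, m`, `f m (x n p) → f m (y n)` as `p → ∞`.
  have hxy : ∀ n m, Tendsto (fun p => f m (x n p)) atTop (𝓝 (f m (y n))) := by
    intro n m
    have h0 : Tendsto (fun p => f m (x n p) - f m (y n)) atTop (𝓝 0) := by
      apply squeeze_zero_norm' (a := fun p : ℕ => 1 / ((p : ℝ) + 1))
      · filter_upwards [eventually_ge_atTop m] with p hp
        simpa [Real.norm_eq_abs] using (hx n p m hp).le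
      · exact tendsto_one_div_add_atTop_nhds_zero_nat
    simpa using h0.add_const (f m (y n))
  -- Step 3: diagonal extraction of a pointwise convergent subsequence on all the `x n p`.
  set e : ℕ → X := fun i => x i.unpair.1 i.unpair.2 with he
  have hcmp : IsCompact {u : ℕ → ℝ | ∀ i, u i ∈ Set.Icc (-C) C} :=
    isCompact_pi_infinite fun _ => isCompact_Icc
  have hmem : ∀ k, (fun i => f k (e i)) ∈ {u : ℕ → ℝ | ∀ i, u i ∈ Set.Icc (-C) C} := by
    intro k i
    exact Set.mem_Icc.mpr (abs_le.mp (hbd _ (hf k) _))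
  obtain ⟨G, hG, φ, hφ, hGconv⟩ := hcmp.tendsto_subseq hmem
  have hGconv' : ∀ i, Tendsto (fun k => f (φ k) (e i)) atTop (𝓝 (G i)) := by
    intro i
    have := (tendsto_pi_nhds.mp hGconv) i
    simpa [Function.comp] using this
  set g : ℕ → ℕ → ℝ := fun n p => G (Nat.pair n p) with hg
  have hgconv : ∀ n p, Tendsto (fun k => f (φ k) (x n p)) atTop (𝓝 (g n p)) := by
    intro n p
    have := hGconv' (Nat.pair n p)
    simpa [he, Nat.unpair_pair] using this
  have hgmem : ∀ n p, g n p ∈ Set.Icc (-C) C := fun n p => hG (Nat.pair n p)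
  -- Step 4: first application of `hdl`, for each fixed `n`, to find good indices `p`.
  have key : ∀ n : ℕ, ∃ p, n ≤ p ∧ |g n p - c n| < 1 / ((n : ℝ) + 1) := by
    intro n
    obtain ⟨α, -, ψ, hψ, hψconv⟩ :=
      (isCompact_Icc (a := -C) (b := C)).tendsto_subseq (x := fun p => g n p)
        (fun p => hgmem n p)
    have hψconv' : Tendsto (fun t => g n (ψ t)) atTop (𝓝 α) := hψconv
    have hac : α = c n := by
      refine hdl (fun k => f (φ k)) (fun k => hf _) (fun t => x n (ψ t))
        (fun t => hx₀ n (ψ t)) (fun t => g n (ψ t)) (fun k => f (φ k) (y n)) α (c n)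
        ?_ ?_ ?_ ?_
      · intro t; exact hgconv n (ψ t)
      · exact hψconv'
      · intro k; exact (hxy n (φ k)).comp hψ.tendsto_atTop
      · exact (hc n).comp hφ.tendsto_atTop
    rw [hac] at hψconv'
    have h1 : ∀ᶠ t in atTop, n ≤ ψ t := hψ.tendsto_atTop.eventually_ge_atTop n
    have h2 : ∀ᶠ t in atTop, |g n (ψ t) - c n| < 1 / ((n : ℝ) + 1) :=
      hψconv'.eventually (eventually_abs_sub_lt (c n) (by positivity))
    obtain ⟨t, ht1, ht2⟩ := (h1.and h2).exists
    exact ⟨ψ t, ht1, ht2⟩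
  choose p hp hpc using key
  -- Step 5: second application of `hdl`, to the points `x n (p n)`.
  refine hdl (fun k => f (φ k)) (fun k => hf _) (fun n => x n (p n))
    (fun n => hx₀ n (p n)) (fun n => g n (p n)) (fun k => d (φ k)) r s ?_ ?_ ?_ ?_
  · intro n; exact hgconv n (p n)
  · have hdiff : Tendsto (fun n => g n (p n) - c n) atTop (𝓝 0) := by
      apply squeeze_zero_norm' (a := fun n : ℕ => 1 / ((n : ℝ) + 1))
      · exact Eventually.of_forall fun n => by
          simpa [Real.norm_eq_abs] using (hpc n).le
      · exact tendsto_one_div_add_atTop_nhds_zero_nat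
    simpa using hdiff.add hcr
  · intro k
    have h0 : Tendsto (fun n => f (φ k) (x n (p n)) - f (φ k) (y n)) atTop (𝓝 0) := by
      apply squeeze_zero_norm' (a := fun n : ℕ => 1 / ((n : ℝ) + 1))
      · filter_upwards [eventually_ge_atTop (φ k)] with n hn
        have h1 : |f (φ k) (x n (p n)) - f (φ k) (y n)| < 1 / ((p n : ℝ) + 1) :=
          hx n (p n) (φ k) (hn.trans (hp n))
        have h2 : 1 / ((p n : ℝ) + 1) ≤ 1 / ((n : ℝ) + 1) := by
          apply one_div_le_one_div_of_le (by positivity)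
          have := hp n
          linarith [(Nat.cast_le (α := ℝ)).mpr this]
        simpa [Real.norm_eq_abs] using h1.le.trans h2
      · exact tendsto_one_div_add_atTop_nhds_zero_nat
    simpa using h0.add (hd (φ k))
  · exact hds.comp hφ.tendsto_atTop
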